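/- arXiv:1308.0719 — 2 statements merged into one kernel-verified Lean document; each statement's English description precedes it below -/
import Mathlib

section
/- Let λ_1,...,λ_n, C ∈ ℝ∖{0} and smooth ω_j : I → ℂ∖{0}. Suppose for all s ∈ I and all (x_1,...,x_n) with Σ λ_j x_j² = C, and for all a ∈ ℝ^n with Σ_j λ_j x_j a_j = 0, we have Σ_l a_l x_l Im(ω̄_l(s) ω̇_l(s)) = 0. If for each j there exists a point x on the quadric Σ λ_j x_j² = C with x_j ≠ 0 and x_k ≠ 0 for some k ≠ j (e.g., n ≥ 2 and all λ_j C > 0 or the quadric is suitably nondegenerate), then Im(ω̄_1 ω̇_1)/λ_1 = ⋯ = Im(ω̄_n ω̇_n)/λ_n on I. Conversely, if Im(ω̄_j ω̇_j)/λ_j is independent of j, then the displayed sum vanishes for all such x, a. -/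
open Finset Complex

/-- the tangential vanishing condition
Σ aₗxₗ Im(ω̄ₗω̇ₗ) = 0 (for all x on the quadric Σλⱼxⱼ² = C and all a tangent at x)
holds iff Im(ω̄ⱼω̇ⱼ)/λⱼ is independent of j on I, assuming the quadric is rich
enough (for all j ≠ k it has a point with xⱼ ≠ 0 ≠ x_k). -/
theorem stmt_6 (n : ℕ) (I : Set ℝ) (hI : IsOpen I)
    (lam : Fin n → ℝ) (C : ℝ) (hlam : ∀ j, lam j ≠ 0) (hC : C ≠ 0)
    (ω : Fin n → ℝ → ℂ) (hω0 : ∀ j, ∀ s ∈ I, ω j s ≠ 0)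
    (ω' : Fin n → ℝ → ℂ) (hderiv : ∀ j, ∀ s ∈ I, HasDerivAt (ω j) (ω' j s) s)
    (hrich : ∀ j k : Fin n, j ≠ k →
      ∃ x : Fin n → ℝ, (∑ l, lam l * (x l) ^ 2 = C) ∧ x j ≠ 0 ∧ x k ≠ 0) :
    (∀ s ∈ I, ∀ x : Fin n → ℝ, (∑ l, lam l * (x l) ^ 2 = C) →
        ∀ a : Fin n → ℝ, (∑ l, lam l * x l * a l = 0) →
          ∑ l, a l * x l * ((starRingEnd ℂ) (ω l s) * ω' l s).im = 0)
      ↔ (∀ s ∈ I, ∀ j k : Fin n,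
          ((starRingEnd ℂ) (ω j s) * ω' j s).im / lam j
            = ((starRingEnd ℂ) (ω k s) * ω' k s).im / lam k) := by
  set f : Fin n → ℝ → ℝ := fun l s => ((starRingEnd ℂ) (ω l s) * ω' l s).im with hf
  constructor
  · intro H s hs j k
    rcases eq_or_ne j k with rfl | hjk
    · rfl
    obtain ⟨x, hx, hxj, hxk⟩ := hrich j k hjk
    set a : Fin n → ℝ := fun l =>
      if l = j then lam k * x k else if l = k then -(lam j * x j) else 0 with ha
    have haj : a j = lam k * x k := by simp [ha]
    have hak : a k = -(lam j * x j) := by simp [ha, hjk.symm]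
    have hsum : ∀ g : Fin n → ℝ, (∀ c, c ≠ j → c ≠ k → g c = 0) →
        ∑ l, g l = g j + g k := by
      intro g hg
      rw [← Finset.sum_subset (Finset.subset_univ {j, k})
        (by intro c _ hc; simp only [Finset.mem_insert, Finset.mem_singleton, not_or] at hc
            exact hg c hc.1 hc.2), Finset.sum_pair hjk]
    have htan : ∑ l, lam l * x l * a l = 0 := by
      rw [hsum _ (by intro c hcj hck; simp [ha, hcj, hck]), haj, hak]; ring
    have key := H s hs x hx a htan
    rw [hsum _ (by intro c hcj hck; simp [ha, hcj, hck]), haj, hak] at key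
    rw [div_eq_div_iff (hlam j) (hlam k)]
    have h2 : (x j * x k) * (f j s * lam k) = (x j * x k) * (f k s * lam j) := by
      nlinarith [key]
    exact mul_left_cancel₀ (mul_ne_zero hxj hxk) h2
  · intro H s hs x hx a htan
    have hn : n ≠ 0 := by
      rintro rfl
      simp at hx
      exact hC hx.symm
    set j0 : Fin n := ⟨0, Nat.pos_of_ne_zero hn⟩
    set c : ℝ := f j0 s / lam j0 with hc
    have hfl : ∀ l, f l s = c * lam l := by
      intro l
      have h1 : f l s / lam l = c := H s hs l j0
      rw [div_eq_iff (hlam l)] at h1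
      rw [h1]
    have : ∑ l, a l * x l * f l s = c * ∑ l, lam l * x l * a l := by
      rw [Finset.mul_sum]
      refine Finset.sum_congr rfl fun l _ => ?_
      rw [hfl l]; ring
    rw [show (∑ l, a l * x l * ((starRingEnd ℂ) (ω l s) * ω' l s).im)
        = ∑ l, a l * x l * f l s from rfl, this, htan, mul_zero]
end

section
/- Let λ_1,...,λ_n ∈ ℝ∖{0}, C ∈ ℝ∖{0}, r ∈ (0,∞)^n, φ̇ ∈ (0,∞)^n, and suppose the quadric Q = {x : Σ λ_j x_j² = C} is such that for every pair j ≠ k it contains a point with x_j x_k ≠ 0. Then the following are equivalent: (i) for every x ∈ Q and every a ∈ ℝ^n with Σ_j λ_j x_j a_j = 0 one has (Σ_p a_p x_p r_p²)(Σ_q x_q² r_q² φ̇_q) = 0; (ii) r_1²/λ_1 = r_2²/λ_2 = ⋯ = r_n²/λ_n. -/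
open Finset

/-- on a rich quadric Σλⱼxⱼ² = C, the vanishing
(Σ_p a_p x_p r_p²)(Σ_q x_q² r_q² φ̇_q) = 0 for all x on the quadric and all a
tangent at x is equivalent to r₁²/λ₁ = ⋯ = rₙ²/λₙ. -/
theorem stmt_8 (n : ℕ) (lam : Fin n → ℝ) (C : ℝ)
    (hlam : ∀ j, lam j ≠ 0) (hC : C ≠ 0)
    (r φ' : Fin n → ℝ) (hr : ∀ j, 0 < r j) (hφ' : ∀ j, 0 < φ' j)
    (hrich : ∀ j k : Fin n, j ≠ k →
      ∃ x : Fin n → ℝ, (∑ l, lam l * (x l) ^ 2 = C) ∧ x j ≠ 0 ∧ x k ≠ 0) :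
    (∀ x : Fin n → ℝ, (∑ l, lam l * (x l) ^ 2 = C) →
        ∀ a : Fin n → ℝ, (∑ l, lam l * x l * a l = 0) →
          (∑ p, a p * x p * (r p) ^ 2) * (∑ q, (x q) ^ 2 * (r q) ^ 2 * φ' q) = 0)
      ↔ (∀ j k : Fin n, (r j) ^ 2 / lam j = (r k) ^ 2 / lam k) := by
  constructor
  · intro h j k
    rcases eq_or_ne j k with rfl | hjk
    · rfl
    obtain ⟨x, hx, hxj, hxk⟩ := hrich j k hjk
    set a : Fin n → ℝ := fun l => if l = j then lam k * x k else if l = k then -(lam j * x j) else 0 with ha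
    have hsupp : ∀ l ∈ Finset.univ, l ∉ ({j, k} : Finset (Fin n)) → lam l * x l * a l = 0 := by
      intro l _ hl
      simp only [Finset.mem_insert, Finset.mem_singleton, not_or] at hl
      simp [ha, hl.1, hl.2]
    have htan : ∑ l, lam l * x l * a l = 0 := by
      rw [← Finset.sum_subset (Finset.subset_univ ({j, k} : Finset (Fin n))) hsupp,
        Finset.sum_pair hjk]
      simp only [ha, if_pos rfl, if_neg hjk.symm, if_neg hjk, eq_self_iff_true, if_true]
      ring
    have hmain := h x hx a htan
    have hpos : 0 < ∑ q, (x q) ^ 2 * (r q) ^ 2 * φ' q := by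
      apply Finset.sum_pos'
      · intro i _
        have := (hr i).le
        have := (hφ' i).le
        positivity
      · refine ⟨j, Finset.mem_univ _, ?_⟩
        have h1 : 0 < (x j) ^ 2 := by positivity
        have h2 := hr j
        have h3 := hφ' j
        positivity
    have hfirst : ∑ p, a p * x p * (r p) ^ 2 = 0 := by
      rcases mul_eq_zero.mp hmain with h0 | h0
      · exact h0
      · exact absurd h0 hpos.ne'
    have hsupp2 : ∀ l ∈ Finset.univ, l ∉ ({j, k} : Finset (Fin n)) → a l * x l * (r l) ^ 2 = 0 := by
      intro l _ hl
      simp only [Finset.mem_insert, Finset.mem_singleton, not_or] at hl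
      simp [ha, hl.1, hl.2]
    rw [← Finset.sum_subset (Finset.subset_univ ({j, k} : Finset (Fin n))) hsupp2,
      Finset.sum_pair hjk] at hfirst
    simp only [ha, if_pos rfl, if_neg hjk.symm, if_neg hjk, eq_self_iff_true, if_true] at hfirst
    have hxjk : x j * x k ≠ 0 := mul_ne_zero hxj hxk
    have hkey : lam k * (r j) ^ 2 = lam j * (r k) ^ 2 := by
      have : x j * x k * (lam k * (r j) ^ 2 - lam j * (r k) ^ 2) = 0 := by ring_nf; ring_nf at hfirst; linarith
      rcases mul_eq_zero.mp this with h0 | h0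
      · exact absurd h0 hxjk
      · linarith
    rw [div_eq_div_iff (hlam j) (hlam k)]
    linarith
  · intro hrr x hx a hta
    cases isEmpty_or_nonempty (Fin n) with
    | inl h => simp
    | inr h =>
      obtain ⟨i0⟩ := h
      have hkey : ∀ p, (r p) ^ 2 = (r i0 ^ 2 / lam i0) * lam p := by
        intro p
        exact (div_eq_iff (hlam p)).mp (hrr p i0)
      have hsum : ∑ p, a p * x p * (r p) ^ 2
          = (r i0 ^ 2 / lam i0) * ∑ l, lam l * x l * a l := by
        rw [Finset.mul_sum]
        exact Finset.sum_congr rfl fun p _ => by rw [hkey p]; ring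
      rw [hsum, hta, mul_zero, zero_mul]
end
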